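/- arXiv:2005.05423 — 3 statements merged into one kernel-verified Lean document; each statement's English description precedes it below -/
import Mathlib

section
/- Let k ≥ 1 and let s be a finite sequence over a set S in which some element occurs at least k+1 times. Then s contains a contiguous subsequence that is a k-cycle, i.e., a contiguous subsequence whose first and last entries coincide, in which at least one element occurs exactly k+1 times, and in which every element occurs at most k+1 times. -/
set_option autoImplicit false

/-! ## Syntax: arguments, atoms, rules -/

/-- Rule arguments: constants or variables (variables are natural numbers). -/
inductive RArg (C : Type) : Type
  | const : C → RArg C
  | var : ℕ → RArg C

/-- Atoms: a predicate applied to a list of arguments. -/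
structure Atom (P τ : Type) : Type where
  pred : P
  args : List τ

/-- An existential rule: finite sets of body and head atoms whose arguments are
constants and variables. -/
structure Rule (P C : Type) : Type where
  body : Finset (Atom P (RArg C))
  head : Finset (Atom P (RArg C))

instance {P C : Type} : Inhabited (Rule P C) := ⟨⟨∅, ∅⟩⟩

def RArg.toVar? {C : Type} : RArg C → Option ℕ
  | RArg.var v => some v
  | RArg.const _ => none

/-- The list of variables occurring in (the argument list of) an atom. -/
def Atom.varsL {P C : Type} (a : Atom P (RArg C)) : List ℕ :=
  a.args.filterMap RArg.toVar?

/-- The (universal) variables of a rule: the variables of its body. -/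
def Rule.bodyVars {P C : Type} (r : Rule P C) : Finset ℕ :=
  r.body.biUnion fun a => a.varsL.toFinset

def Rule.headVars {P C : Type} (r : Rule P C) : Finset ℕ :=
  r.head.biUnion fun a => a.varsL.toFinset

/-- Frontier variables: body variables occurring in the head. -/
def Rule.frontier {P C : Type} (r : Rule P C) : Finset ℕ :=
  r.bodyVars ∩ r.headVars

/-- Existential variables: head variables not occurring in the body. -/
def Rule.exVars {P C : Type} (r : Rule P C) : Finset ℕ :=
  r.headVars \ r.bodyVars

/-- A canonical listing of the frontier variables of a rule. -/
def Rule.frontierList {P C : Type} (r : Rule P C) : List ℕ :=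
  r.frontier.sort (· ≤ ·)

/-- A rule is simple if no variable occurs more than once in its body. -/
def Rule.IsSimple {P C : Type} (r : Rule P C) : Prop :=
  (∀ a ∈ r.body, a.varsL.Nodup) ∧
    ∀ a ∈ r.body, ∀ b ∈ r.body, a ≠ b → ∀ v ∈ a.varsL, v ∉ b.varsL

/-! ## Ground terms, instances, databases -/

/-- Ground terms over constants `C` and function symbols `F`. -/
inductive GTerm (C F : Type) : Type
  | const : C → GTerm C F
  | func : F → List (GTerm C F) → GTerm C F

/-- The height (nesting depth) of a ground term; constants have height 0. -/
def GTerm.height {C F : Type} : GTerm C F → ℕ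
  | .const _ => 0
  | .func _ ts => 1 + (ts.attach.map (fun t => GTerm.height t.1)).foldr max 0
decreasing_by
  simp_wf
  have := List.sizeOf_lt_of_mem t.2
  omega

/-- Ground constants: the constants `C` occurring in rules together with the
fresh indexed constants `⟨v, i⟩` (and the fresh constant `∗ = inr (0,0)`). -/
abbrev GConst (C : Type) : Type := C ⊕ (ℕ × ℕ)

/-- Skolem function symbols: one fresh symbol `f_{r,z}` for each rule `r` and
existential variable `z`. -/
abbrev SkFun (P C : Type) : Type := Rule P C × ℕ

/-- Ground terms built from constants and skolem function symbols. -/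
abbrev GT (P C : Type) : Type := GTerm (GConst C) (SkFun P C)

abbrev GAtom (P C : Type) : Type := Atom P (GT P C)

/-- An instance is a set of atoms over ground terms. -/
abbrev Inst (P C : Type) : Type := Set (GAtom P C)

/-- An assignment of ground terms to variables. -/
abbrev Assign (P C : Type) : Type := ℕ → GT P C

/-- A database: a finite instance all of whose terms are constants. -/
def IsDatabase {P C : Type} (I : Inst P C) : Prop :=
  I.Finite ∧ ∀ a ∈ I, ∀ t ∈ a.args, ∃ c : GConst C, t = GTerm.const c

/-! ## Applying assignments and substitutions -/

def RArg.interp {P C : Type} (h : Assign P C) : RArg C → GT P C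
  | RArg.const c => GTerm.const (Sum.inl c)
  | RArg.var v => h v

def Atom.interp {P C : Type} (h : Assign P C) (a : Atom P (RArg C)) : GAtom P C :=
  ⟨a.pred, a.args.map (RArg.interp h)⟩

/-- The image `h(body(r))` of the body of a rule under an assignment. -/
def Rule.bodyI {P C : Type} (r : Rule P C) (h : Assign P C) : Inst P C :=
  (Atom.interp h) '' ↑r.body

/-- The image `h(head(r))` of the head of a rule under an assignment. -/
def Rule.headI {P C : Type} (r : Rule P C) (h : Assign P C) : Inst P C :=
  (Atom.interp h) '' ↑r.head

/-- The skolem extension of an assignment: each existential variable `z` of `r`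
is sent to the skolem term `f_{r,z}(x)`, where `x` lists the frontier variables. -/
def Rule.skolemExt {P C : Type} (r : Rule P C) (h : Assign P C) : Assign P C :=
  fun v => if v ∈ r.exVars then GTerm.func (r, v) (r.frontierList.map h) else h v

/-- `h(sk(head(r)))`: the atoms added when the trigger `(r,h)` is applied. -/
def Rule.skApply {P C : Type} (r : Rule P C) (h : Assign P C) : Inst P C :=
  r.headI (r.skolemExt h)

/-- A ground substitution: fixes all constants (skolem terms are nulls and may
be mapped anywhere). -/
def IsGSubst {P C : Type} (f : GT P C → GT P C) : Prop :=
  ∀ c : GConst C, f (GTerm.const c) = GTerm.const c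

def Atom.mapArgs {P C : Type} (f : GT P C → GT P C) (a : GAtom P C) : GAtom P C :=
  ⟨a.pred, a.args.map f⟩

/-! ## Triggers, the restricted chase, chained sequences, activeness -/

/-- `(r,h)` is a trigger on `I`: `h` is a homomorphism from `body(r)` to `I`. -/
def Trigger {P C : Type} (r : Rule P C) (h : Assign P C) (I : Inst P C) : Prop :=
  r.bodyI h ⊆ I

/-- An active trigger: no extension of `h` on the existential variables
satisfies the head in `I`. -/
def ActiveTrigger {P C : Type} (r : Rule P C) (h : Assign P C) (I : Inst P C) : Prop :=
  Trigger r h I ∧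
    ∀ h' : Assign P C, (∀ v ∈ r.bodyVars, h' v = h v) → ¬ (r.headI h' ⊆ I)

/-- `π` leads to a restricted chase sequence `Is 0, …, Is π.length` from `Is 0 = I0`,
generated by the active triggers `(π.get i, hs i)`. -/
def RCSeq {P C : Type} (π : List (Rule P C)) (I0 : Inst P C)
    (Is : ℕ → Inst P C) (hs : ℕ → Assign P C) : Prop :=
  Is 0 = I0 ∧ ∀ i < π.length,
    ActiveTrigger (π.getD i default) (hs i) (Is i) ∧
      Is (i + 1) = Is i ∪ (π.getD i default).skApply (hs i)

/-- `π` leads to a skolem chase sequence (triggers need not be active). -/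
def SkSeq {P C : Type} (π : List (Rule P C)) (I0 : Inst P C)
    (Is : ℕ → Inst P C) (hs : ℕ → Assign P C) : Prop :=
  Is 0 = I0 ∧ ∀ i < π.length,
    Trigger (π.getD i default) (hs i) (Is i) ∧
      Is (i + 1) = Is i ∪ (π.getD i default).skApply (hs i)

/-- Rule `r'` depends on rule `r` w.r.t. instance `I`. -/
def RuleDependsOn {P C : Type} (r' r : Rule P C) (I : Inst P C) : Prop :=
  ∃ h g : Assign P C,
    r.bodyI h ⊆ I ∧ r'.bodyI g ⊆ I ∪ r.skApply h ∧ ¬ (r'.bodyI g ⊆ I)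

/-- The chained property of a restricted chase sequence for `π`: some projection of
`π` preserving the end points is linked by the depends-on relation. -/
def Chained {P C : Type} (π : List (Rule P C)) (I0 : Inst P C)
    (Is : ℕ → Inst P C) (hs : ℕ → Assign P C) : Prop :=
  ∃ (m : ℕ) (j : ℕ → ℕ),
    1 ≤ m ∧
    (∀ i, i + 1 < m → j i < j (i + 1)) ∧
    j 0 = 0 ∧
    j (m - 1) + 1 = π.length ∧
    (∀ i < m, j i < π.length) ∧
    ∀ i, i + 1 < m →
      RuleDependsOn (π.getD (j (i + 1)) default) (π.getD (j i) default)
        (if i = 0 then I0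
         else Is (j i + 1) \ (π.getD (j i) default).skApply (hs (j i)))

/-- A path `π` is active w.r.t. `I0` if there is a chained restricted chase
sequence for `π` starting from `I0`. -/
def ActivePath {P C : Type} (π : List (Rule P C)) (I0 : Inst P C) : Prop :=
  ∃ (Is : ℕ → Inst P C) (hs : ℕ → Assign P C), RCSeq π I0 Is hs ∧ Chained π I0 Is hs

/-! ## Restricted critical databases and renaming -/

/-- The assignment `e_i` sending variable `v` to the fresh indexed constant `⟨v,i⟩`. -/
def idxAssign {P C : Type} (i : ℕ) : Assign P C :=
  fun v => GTerm.const (Sum.inr (v, i))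

/-- The restricted critical database `I^π` of a path `π`. -/
def criticalDB {P C : Type} (π : List (Rule P C)) : Inst P C :=
  ⋃ i ∈ Finset.range π.length, (π.getD i default).bodyI (idxAssign i)

/-- A renaming function: each indexed constant is mapped to itself or to an
indexed constant with strictly smaller index. -/
def IsRenaming (rn : ℕ × ℕ → ℕ × ℕ) : Prop :=
  ∀ p : ℕ × ℕ, rn p = p ∨ (rn p).2 < p.2

def renameGT {P C : Type} (rn : ℕ × ℕ → ℕ × ℕ) : GT P C → GT P C
  | GTerm.const (Sum.inr p) => GTerm.const (Sum.inr (rn p))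
  | t => t

def renameInst {P C : Type} (rn : ℕ × ℕ → ℕ × ℕ) (I : Inst P C) : Inst P C :=
  (fun a => Atom.mapArgs (renameGT rn) a) '' I

/-! ## Cycles, cycle functions, k-safe -/

/-- The number of occurrences of `x` in the list `σ`. -/
noncomputable def occCount {α : Type} (σ : List α) (x : α) : ℕ :=
  {i : Fin σ.length | σ.get i = x}.ncard

/-- A `k`-cycle: a nonempty sequence whose first and last entries coincide, in
which some element occurs exactly `k+1` times and every element occurs at most
`k+1` times. -/
def IsKCycle {α : Type} (k : ℕ) (σ : List α) : Prop :=
  σ ≠ [] ∧ σ.head? = σ.getLast? ∧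
    (∃ x ∈ σ, occCount σ x = k + 1) ∧ ∀ x ∈ σ, occCount σ x ≤ k + 1

/-- `R` belongs to `k`-safe(Φ): every `k`-cycle based on `R` mapped to `F`
(i.e. not satisfying `Φ`) is safe, i.e. active w.r.t. no database. -/
def kSafe {P C : Type} (R : Set (Rule P C)) (k : ℕ) (Φ : List (Rule P C) → Prop) : Prop :=
  ∀ σ : List (Rule P C), (∀ r ∈ σ, r ∈ R) → IsKCycle k σ → ¬ Φ σ →
    ∀ I0 : Inst P C, IsDatabase I0 → ¬ ActivePath σ I0

/-- The cycle function derived from a class `Δ` of rule sets: a cycle is mapped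
to `T` iff its set of distinct rules belongs to `Δ`. -/
def PhiDelta {P C : Type} (Δ : Set (Set (Rule P C))) : List (Rule P C) → Prop :=
  fun σ => {r | r ∈ σ} ∈ Δ

/-! ## The skolem chase and all-instance termination -/

def skStep {P C : Type} (R : Set (Rule P C)) (I : Inst P C) : Inst P C :=
  I ∪ {a | ∃ r ∈ R, ∃ h : Assign P C, Trigger r h I ∧ a ∈ r.skApply h}

def skIter {P C : Type} (R : Set (Rule P C)) (I : Inst P C) : ℕ → Inst P C
  | 0 => I
  | n + 1 => skStep R (skIter R I n)

/-- The skolem chase `chase_sk(I,R)`. -/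
def skChase {P C : Type} (R : Set (Rule P C)) (I : Inst P C) : Inst P C :=
  ⋃ n, skIter R I n

/-- `R` is all-instance terminating under the skolem chase. -/
def SkTerminating {P C : Type} (R : Set (Rule P C)) : Prop :=
  ∀ I : Inst P C, IsDatabase I → (skChase R I).Finite

/-- An infinite (fair) restricted chase sequence of `R` from `I0`. -/
def InfiniteRCS {P C : Type} (R : Set (Rule P C)) (I0 : Inst P C)
    (Is : ℕ → Inst P C) (rs : ℕ → Rule P C) (hs : ℕ → Assign P C) : Prop :=
  Is 0 = I0 ∧
  (∀ i, rs i ∈ R ∧ ActiveTrigger (rs i) (hs i) (Is i) ∧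
      Is (i + 1) = Is i ∪ (rs i).skApply (hs i)) ∧
  (∀ i j, i ≠ j → ¬ (rs i = rs j ∧ hs i = hs j)) ∧
  (∀ i, ∀ r ∈ R, ∀ h : Assign P C, ActiveTrigger r h (Is i) →
      ∃ j, i ≤ j ∧ ((rs j = r ∧ hs j = h) ∨ ¬ ActiveTrigger r h (Is j)))

/-- `R` is all-instance terminating under the restricted chase. -/
def ResTerminating {P C : Type} (R : Set (Rule P C)) : Prop :=
  ¬ ∃ (I0 : Inst P C) (Is : ℕ → Inst P C) (rs : ℕ → Rule P C) (hs : ℕ → Assign P C),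
      IsDatabase I0 ∧ InfiniteRCS R I0 Is rs hs

/-! ## Heights, sizes, bounded rule sets, MembCheck -/

/-- Every term occurring in the instance `I` has height at most `n`. -/
def instHeightLe {P C : Type} (I : Inst P C) (n : ℕ) : Prop :=
  ∀ a ∈ I, ∀ t ∈ a.args, GTerm.height t ≤ n

/-- The size of a rule: the sum of the sizes of its atoms. -/
def Rule.size {P C : Type} (r : Rule P C) : ℕ :=
  (∑ a ∈ r.body, a.args.length) + ∑ a ∈ r.head, a.args.length

/-- `‖R‖`: the number of symbols occurring in the rule set `R`. -/
def ruleSetSize {P C : Type} (R : Finset (Rule P C)) : ℕ :=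
  ∑ r ∈ R, r.size

/-- `R` is `δ`-bounded under the restricted chase (with `bound = δ(‖R‖)`):
every restricted chase sequence of `R` and any database has height at most `bound`. -/
def DeltaBoundedRes {P C : Type} (R : Set (Rule P C)) (bound : ℕ) : Prop :=
  ∀ I0 : Inst P C, IsDatabase I0 → ∀ π : List (Rule P C), (∀ r ∈ π, r ∈ R) →
    ∀ (Is : ℕ → Inst P C) (hs : ℕ → Assign P C), RCSeq π I0 Is hs →
      ∀ i ≤ π.length, instHeightLe (Is i) bound

/-- The skolem critical database `I^R`: all atoms `P(t)` where `P` occurs in `R`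
(with an arity it has in `R`) and `t` ranges over tuples of constants occurring in
`R` together with the fresh constant `∗ = inr (0,0)`. -/
def skCritDB {P C : Type} (R : Set (Rule P C)) : Inst P C :=
  {a | (∃ r ∈ R, ∃ b : Atom P (RArg C), (b ∈ r.body ∨ b ∈ r.head) ∧
          b.pred = a.pred ∧ b.args.length = a.args.length) ∧
       ∀ t ∈ a.args,
         (∃ c : C, (∃ r ∈ R, ∃ b : Atom P (RArg C), (b ∈ r.body ∨ b ∈ r.head) ∧
             RArg.const c ∈ b.args) ∧ t = GTerm.const (Sum.inl c)) ∨
         t = GTerm.const (Sum.inr (0, 0))}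

/-- The condition under which the procedure `MembCheck(R,δ)` returns `T`. -/
def MembCheckT {P C : Type} (R : Finset (Rule P C)) (δ : ℕ → ℕ) : Prop :=
  instHeightLe (skChase (↑R : Set (Rule P C)) (skCritDB (↑R : Set (Rule P C))))
      (δ (ruleSetSize R)) ∨
  (∀ π : List (Rule P C), π ≠ [] → (∀ r ∈ π, r ∈ R) →
    (∃ (Is : ℕ → Inst P C) (hs : ℕ → Assign P C),
        SkSeq π (skCritDB (↑R : Set (Rule P C))) Is hs ∧
        ∃ i ≤ π.length, ∃ a ∈ Is i, ∃ t ∈ a.args,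
          GTerm.height t = δ (ruleSetSize R) + 1) →
    ∀ rn : ℕ × ℕ → ℕ × ℕ, IsRenaming rn →
      ¬ ActivePath π (renameInst rn (criticalDB π)))

lemma occCount_eq_count {α : Type} [DecidableEq α] (σ : List α) (x : α) :
    occCount σ x = σ.count x := by
  unfold occCount
  rw [show {i : Fin σ.length | σ.get i = x} = ↑(Finset.univ.filter fun i : Fin σ.length => σ.get i = x) from by ext i; simp,
    Set.ncard_coe_finset]
  have h1 : (Finset.univ.filter fun i : Fin σ.length => σ.get i = x).card
      = (List.finRange σ.length).countP (fun i => decide (σ.get i = x)) := by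
    rw [Fin.univ_def, List.countP_eq_length_filter]; rfl
  rw [h1]
  conv_rhs => rw [← List.map_get_finRange σ]
  rw [List.count_eq_countP, List.countP_map]
  congr 1

lemma exists_prefix_count {α : Type} [DecidableEq α] (s : List α) (x : α) (n : ℕ)
    (h1 : 1 ≤ n) (h2 : n ≤ s.count x) :
    ∃ p, p <+: s ∧ p.count x = n ∧ p.getLast? = some x := by
  induction s generalizing n with
  | nil => simp at h2; omega
  | cons a l ih =>
    by_cases hax : a = x
    · subst hax
      rcases Nat.eq_or_lt_of_le h1 with h1' | h1'
      · exact ⟨[a], ⟨l, rfl⟩, by simp [← h1'], rfl⟩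
      · have h2' : n - 1 ≤ l.count a := by
          rw [List.count_cons_self] at h2; omega
        obtain ⟨p, hp, hpc, hpl⟩ := ih (n - 1) (by omega) h2'
        have hpne : p ≠ [] := by rintro rfl; simp at hpl
        obtain ⟨r, hr⟩ := hp
        exact ⟨a :: p, ⟨r, by simp [hr]⟩, by simp [hpc]; omega,
          by rw [List.getLast?_cons, hpl]; simp [hpne]⟩
    · have h2' : n ≤ l.count x := by
        rwa [List.count_cons_of_ne hax] at h2
      obtain ⟨p, hp, hpc, hpl⟩ := ih n h1 h2'
      have hpne : p ≠ [] := by rintro rfl; simp at hpl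
      obtain ⟨r, hr⟩ := hp
      exact ⟨a :: p, ⟨r, by simp [hr]⟩,
        by rw [List.count_cons_of_ne hax, hpc],
        by rw [List.getLast?_cons, hpl]; simp [hpne]⟩

lemma exists_suffix_count {α : Type} [DecidableEq α] (s : List α) (x : α) (n : ℕ)
    (h1 : 1 ≤ n) (h2 : n ≤ s.count x) :
    ∃ t, t <:+ s ∧ t.count x = n ∧ t.head? = some x := by
  induction s with
  | nil => simp at h2; omega
  | cons a l ih =>
    by_cases hl : n ≤ l.count x
    · obtain ⟨t, ht, htc, hth⟩ := ih hl
      exact ⟨t, ht.trans (List.suffix_cons a l), htc, hth⟩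
    · have hax : a = x := by
        by_contra hax
        rw [List.count_cons_of_ne hax] at h2
        exact hl h2
      subst hax
      refine ⟨a :: l, List.suffix_refl _, ?_, rfl⟩
      rw [List.count_cons_self] at h2 ⊢
      omega

lemma exists_window {α : Type} [DecidableEq α] (s : List α) (x : α) (n : ℕ)
    (h1 : 1 ≤ n) (h2 : n ≤ s.count x) :
    ∃ t, t <:+: s ∧ t.count x = n ∧ t.head? = some x ∧ t.getLast? = some x := by
  obtain ⟨p, hp, hpc, hpl⟩ := exists_prefix_count s x n h1 h2
  obtain ⟨t, ht, htc, hth⟩ := exists_suffix_count p x n h1 (le_of_eq hpc.symm)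
  have htne : t ≠ [] := by rintro rfl; simp at hth
  obtain ⟨u, hu⟩ := ht
  have hlast : t.getLast? = some x := by
    rw [← hpl, ← hu, List.getLast?_append_of_ne_nil u htne]
  exact ⟨t, (List.IsSuffix.isInfix ⟨u, hu⟩).trans hp.isInfix, htc, hth, hlast⟩

lemma aux_main {α : Type} [DecidableEq α] (k : ℕ) :
    ∀ n (s : List α), s.length ≤ n → (∃ x ∈ s, k + 1 ≤ s.count x) →
      ∃ t, t <:+: s ∧ t ≠ [] ∧ t.head? = t.getLast? ∧
        (∃ x ∈ t, t.count x = k + 1) ∧ ∀ x ∈ t, t.count x ≤ k + 1 := by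
  intro n
  induction n with
  | zero =>
    rintro s hs ⟨x, hx, -⟩
    rw [Nat.le_zero, List.length_eq_zero_iff] at hs
    subst hs; simp at hx
  | succ n ih =>
    rintro s hs ⟨x, hx, hc⟩
    obtain ⟨t, hts, htc, hth, htl⟩ := exists_window s x (k + 1) (by omega) hc
    have htne : t ≠ [] := by rintro rfl; simp at hth
    have hxt : x ∈ t := by
      cases t with
      | nil => simp at hth
      | cons a l => simp at hth; simp [hth]
    by_cases hall : ∀ y ∈ t, t.count y ≤ k + 1
    · exact ⟨t, hts, htne, hth.trans htl.symm, ⟨x, hxt, htc⟩, hall⟩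
    · push_neg at hall
      obtain ⟨y, hy, hyc⟩ := hall
      have hsplit : t.dropLast ++ [t.getLast htne] = t := List.dropLast_append_getLast htne
      have hcnt : k + 1 ≤ t.dropLast.count y := by
        have : (t.dropLast ++ [t.getLast htne]).count y = t.dropLast.count y + ([t.getLast htne] : List α).count y := List.count_append
        rw [hsplit] at this
        have h1 : ([t.getLast htne] : List α).count y ≤ 1 := List.count_le_length
        omega
      have hyd : y ∈ t.dropLast := by
        have : 0 < t.dropLast.count y := by omega
        exact List.count_pos_iff.mp this
      have hlen : t.dropLast.length ≤ n := by
        have h1 : t.length ≤ s.length := hts.length_le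
        have h2 : t.dropLast.length = t.length - 1 := List.length_dropLast
        have h3 : 1 ≤ t.length := List.length_pos_iff.mpr htne
        omega
      obtain ⟨u, hu, rest⟩ := ih t.dropLast hlen ⟨y, hyd, hcnt⟩
      have hdt : t.dropLast <:+: t := ⟨[], [t.getLast htne], by simpa using hsplit⟩
      exact ⟨u, (hu.trans hdt).trans hts, rest⟩

/-- If some element occurs at least `k+1` times in a finite sequence `s`
(`k ≥ 1`), then `s` contains a contiguous subsequence that is a `k`-cycle. -/
theorem exists_kCycle_infix_of_many_occurrences
    {S : Type} (k : ℕ) (hk : 1 ≤ k) (s : List S)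
    (hocc : ∃ x ∈ s, k + 1 ≤ occCount s x) :
    ∃ t : List S, t <:+: s ∧ IsKCycle k t := by
  classical
  obtain ⟨x, hx, hc⟩ := hocc
  rw [occCount_eq_count] at hc
  obtain ⟨t, hts, htne, hhl, ⟨y, hy, hyc⟩, hall⟩ :=
    aux_main k s.length s le_rfl ⟨x, hx, hc⟩
  refine ⟨t, hts, htne, hhl, ⟨y, hy, ?_⟩, fun z hz => ?_⟩
  · rw [occCount_eq_count]; exact hyc
  · rw [occCount_eq_count]; exact hall z hz
end

section
/- Let R be a rule set that is δ-bounded under the restricted chase, using p predicates each of arity at most a, and whose skolemization uses l skolem function symbols each of arity at most m ≥ 1. Let I be a database, and let c ≥ 1 be the number of constants occurring in I or in R, with c + l ≥ 2. Then the result of every terminating restricted chase sequence of R and I contains at most p·(c+l)^{a·(N+1)} atoms, where N = Σ_{i=0}^{δ(||R||)} m^i. -/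
set_option autoImplicit false

/-! ### Auxiliary machinery for the atom-count bound -/

namespace CountAux

open Set

lemma le_foldr_max (l : List ℕ) : ∀ x ∈ l, x ≤ l.foldr max 0 := by
  induction l with
  | nil => simp
  | cons a l ih =>
    intro x hx
    rcases List.mem_cons.mp hx with h | h
    · simp [h]
    · exact le_trans (ih x h) (by simp)

lemma gheight_const {C F : Type} (k : C) : (GTerm.const k : GTerm C F).height = 0 := by
  simp [GTerm.height]

lemma gheight_func {C F : Type} (q : F) (ts : List (GTerm C F)) :
    (GTerm.func q ts).height = 1 + (ts.attach.map (fun t => GTerm.height t.1)).foldr max 0 := by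
  rw [GTerm.height]

lemma gheight_lt_of_mem {C F : Type} {q : F} {ts : List (GTerm C F)} {t : GTerm C F}
    (h : t ∈ ts) : t.height < (GTerm.func q ts).height := by
  rw [gheight_func]
  have hmem : t.height ∈ ts.attach.map (fun t => GTerm.height t.1) :=
    List.mem_map.mpr ⟨⟨t, h⟩, List.mem_attach _ _, rfl⟩
  have := le_foldr_max _ _ hmem
  omega

/-- Terms built from constants in `K` and function symbols `q ∈ F`, each applied to
exactly `ar q` arguments. -/
inductive GoodT {P C : Type} (K : Set (GConst C)) (F : Set (SkFun P C)) (ar : SkFun P C → ℕ) :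
    GT P C → Prop
  | const {k : GConst C} : k ∈ K → GoodT K F ar (GTerm.const k)
  | func {q : SkFun P C} {ts : List (GT P C)} : q ∈ F → ts.length = ar q →
      (∀ t ∈ ts, GoodT K F ar t) → GoodT K F ar (GTerm.func q ts)

end CountAux
namespace CountAux
open Set

lemma TS_count {P C : Type} (K : Set (GConst C)) (F : Set (SkFun P C)) (ar : SkFun P C → ℕ)
    (c l m : ℕ) (hm : 1 ≤ m) (hKfin : K.Finite) (hFfin : F.Finite)
    (hK : K.ncard = c) (hF : F.ncard ≤ l) (hc : 1 ≤ c) (har : ∀ q ∈ F, ar q ≤ m) :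
    ∀ d : ℕ,
      {t : GT P C | GoodT K F ar t ∧ t.height ≤ d}.Finite ∧
      {t : GT P C | GoodT K F ar t ∧ t.height ≤ d}.ncard ≤
        (c + l) ^ (∑ i ∈ Finset.range (d + 1), m ^ i) := by
  have hconst_inj : Function.Injective (GTerm.const : GConst C → GT P C) := by
    intro x y h; cases h; rfl
  obtain ⟨k0, hk0⟩ : K.Nonempty := nonempty_of_ncard_ne_zero (by omega)
  intro d
  induction d with
  | zero =>
    have hsub : {t : GT P C | GoodT K F ar t ∧ t.height ≤ 0} ⊆ GTerm.const '' K := by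
      rintro t ⟨hg, hh⟩
      cases hg with
      | const hk => exact ⟨_, hk, rfl⟩
      | func hq hlen hts => rw [gheight_func] at hh; omega
    have hfin : ((GTerm.const '' K : Set (GT P C))).Finite := hKfin.image _
    refine ⟨hfin.subset hsub, ?_⟩
    calc {t : GT P C | GoodT K F ar t ∧ t.height ≤ 0}.ncard
        ≤ (GTerm.const '' K).ncard := ncard_le_ncard hsub hfin
      _ = c := by rw [ncard_image_of_injective _ hconst_inj, hK]
      _ ≤ (c + l) ^ (∑ i ∈ Finset.range (0 + 1), m ^ i) := by simp
  | succ d ih =>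
    obtain ⟨fin_d, card_d⟩ := ih
    set S : ℕ → Set (GT P C) := fun e => {t : GT P C | GoodT K F ar t ∧ t.height ≤ e} with hS
    set t0 : GT P C := GTerm.const k0 with ht0
    have ht0S : t0 ∈ S d := ⟨GoodT.const hk0, by rw [ht0, gheight_const]; omega⟩
    set enc : GT P C → (GConst C ⊕ SkFun P C) × (Fin m → GT P C) := fun t =>
      match t with
      | GTerm.const k => (Sum.inl k, fun _ => t0)
      | GTerm.func q ts => (Sum.inr q, fun i => ts.getD i t0) with henc
    set A : Set (GConst C ⊕ SkFun P C) := Sum.inl '' K ∪ Sum.inr '' F with hA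
    set Tgt : Set ((GConst C ⊕ SkFun P C) × (Fin m → GT P C)) :=
      A ×ˢ (Set.pi Set.univ fun _ : Fin m => S d) with hTgt
    have hmaps : ∀ t ∈ S (d + 1), enc t ∈ Tgt := by
      rintro t ⟨hg, hh⟩
      cases hg with
      | @const k hk =>
        refine Set.mem_prod.mpr ⟨Or.inl ⟨k, hk, rfl⟩, ?_⟩
        intro i _
        exact ht0S
      | @func q ts hq hlen hts =>
        refine Set.mem_prod.mpr ⟨Or.inr ⟨q, hq, rfl⟩, ?_⟩
        intro i _
        show (ts.getD i t0) ∈ S d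
        by_cases hi : (i : ℕ) < ts.length
        · rw [List.getD_eq_getElem ts t0 hi]
          have hmem : ts[(i : ℕ)] ∈ ts := List.getElem_mem hi
          have hlt := gheight_lt_of_mem (q := q) hmem
          exact ⟨hts _ hmem, by omega⟩
        · rw [List.getD_eq_default ts t0 (by omega)]
          exact ht0S
    have hinj : Set.InjOn enc (S (d + 1)) := by
      rintro t1 ⟨hg1, hh1⟩ t2 ⟨hg2, hh2⟩ heq
      cases hg1 with
      | @const k1 hk1 =>
        cases hg2 with
        | @const k2 hk2 =>
          have : Sum.inl (β := SkFun P C) k1 = Sum.inl k2 := congrArg Prod.fst heq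
          rw [Sum.inl.injEq] at this
          rw [this]
        | @func q2 ts2 hq2 hlen2 hts2 =>
          have : Sum.inl (β := SkFun P C) k1 = Sum.inr q2 := congrArg Prod.fst heq
          simp at this
      | @func q1 ts1 hq1 hlen1 hts1 =>
        cases hg2 with
        | @const k2 hk2 =>
          have : Sum.inr (α := GConst C) q1 = Sum.inl k2 := congrArg Prod.fst heq
          simp at this
        | @func q2 ts2 hq2 hlen2 hts2 =>
          have hqeq : Sum.inr (α := GConst C) q1 = Sum.inr q2 := congrArg Prod.fst heq
          rw [Sum.inr.injEq] at hqeq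
          subst hqeq
          have hlen : ts1.length = ts2.length := by rw [hlen1, hlen2]
          have hle : ts1.length ≤ m := by rw [hlen1]; exact har _ hq1
          have hts : ts1 = ts2 := by
            apply List.ext_getElem hlen
            intro i hi1 hi2
            have hfn : (fun i : Fin m => ts1.getD i t0) = fun i : Fin m => ts2.getD i t0 :=
              congrArg Prod.snd heq
            have h' : ts1.getD i t0 = ts2.getD i t0 := congrFun hfn ⟨i, by omega⟩
            rw [List.getD_eq_getElem ts1 t0 hi1, List.getD_eq_getElem ts2 t0 hi2] at h'
            exact h'
          rw [hts]
    have hAfin : A.Finite := (hKfin.image _).union (hFfin.image _)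
    have hPifin : (Set.pi Set.univ fun _ : Fin m => S d).Finite := Set.Finite.pi fun _ => fin_d
    have hTgtfin : Tgt.Finite := hAfin.prod hPifin
    have hfin : (S (d + 1)).Finite :=
      Set.Finite.of_finite_image (hTgtfin.subset (Set.image_subset_iff.mpr hmaps)) hinj
    refine ⟨hfin, ?_⟩
    have hcard1 : (S (d + 1)).ncard ≤ Tgt.ncard :=
      ncard_le_ncard_of_injOn enc hmaps hinj hTgtfin
    have hAcard : A.ncard ≤ c + l := by
      calc A.ncard ≤ (Sum.inl '' K).ncard + (Sum.inr '' F).ncard := ncard_union_le _ _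
        _ ≤ c + l := by
            rw [ncard_image_of_injective _ Sum.inl_injective,
              ncard_image_of_injective _ Sum.inr_injective, hK]
            omega
    have hPicard : (Set.pi Set.univ fun _ : Fin m => S d).ncard = (S d).ncard ^ m := by
      rw [← Nat.card_coe_set_eq, Nat.card_congr (Equiv.Set.univPi fun _ : Fin m => S d)]
      rw [Nat.card_pi]
      simp [Nat.card_coe_set_eq]
    have hTgtcard : Tgt.ncard = A.ncard * (S d).ncard ^ m := by
      rw [hTgt, ← Nat.card_coe_set_eq, Nat.card_congr (Equiv.Set.prod A _), Nat.card_prod,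
        Nat.card_coe_set_eq, Nat.card_coe_set_eq, hPicard]
    have hsum : (∑ i ∈ Finset.range (d + 1 + 1), m ^ i) =
        m * (∑ i ∈ Finset.range (d + 1), m ^ i) + 1 := by
      rw [geom_sum_succ]
    calc (S (d + 1)).ncard ≤ Tgt.ncard := hcard1
      _ = A.ncard * (S d).ncard ^ m := hTgtcard
      _ ≤ (c + l) * ((c + l) ^ (∑ i ∈ Finset.range (d + 1), m ^ i)) ^ m :=
          Nat.mul_le_mul hAcard (Nat.pow_le_pow_left card_d m)
      _ = (c + l) ^ (∑ i ∈ Finset.range (d + 1 + 1), m ^ i) := by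
          rw [← pow_mul, hsum, mul_comm (∑ i ∈ Finset.range (d + 1), m ^ i) m, pow_succ,
            mul_comm]

end CountAux
namespace CountAux
open Set

lemma atom_count {P C : Type} (Preds : Finset P) (T : Set (GT P C)) (hT : T.Finite)
    (a n : ℕ) (hTc : T.ncard ≤ n) :
    {b : GAtom P C | b.pred ∈ Preds ∧ b.args.length ≤ a ∧ ∀ t ∈ b.args, t ∈ T}.Finite ∧
    {b : GAtom P C | b.pred ∈ Preds ∧ b.args.length ≤ a ∧ ∀ t ∈ b.args, t ∈ T}.ncard ≤
      Preds.card * (n + 1) ^ a := by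
  set GA : Set (GAtom P C) :=
    {b : GAtom P C | b.pred ∈ Preds ∧ b.args.length ≤ a ∧ ∀ t ∈ b.args, t ∈ T} with hGA
  set OptT : Set (Option (GT P C)) := insert none (some '' T) with hOptT
  set enc : GAtom P C → P × (Fin a → Option (GT P C)) :=
    fun b => (b.pred, fun i : Fin a => b.args[(i : ℕ)]?) with henc
  set Tgt : Set (P × (Fin a → Option (GT P C))) :=
    (↑Preds : Set P) ×ˢ (Set.pi Set.univ fun _ : Fin a => OptT) with hTgt
  have hmaps : ∀ b ∈ GA, enc b ∈ Tgt := by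
    rintro b ⟨hp, hlen, hts⟩
    refine Set.mem_prod.mpr ⟨hp, ?_⟩
    intro i _
    show b.args[(i : ℕ)]? ∈ OptT
    by_cases hi : (i : ℕ) < b.args.length
    · rw [List.getElem?_eq_getElem hi]
      exact Set.mem_insert_of_mem _ ⟨_, hts _ (List.getElem_mem hi), rfl⟩
    · rw [List.getElem?_eq_none (by omega)]
      exact Set.mem_insert _ _
  have hinj : Set.InjOn enc GA := by
    rintro ⟨p1, args1⟩ ⟨hp1, hlen1, _⟩ ⟨p2, args2⟩ ⟨hp2, hlen2, _⟩ heq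
    have hpeq : p1 = p2 := congrArg Prod.fst heq
    have hfn := congrArg Prod.snd heq
    have hargs : args1 = args2 := by
      apply List.ext_getElem?
      intro i
      by_cases hi : i < a
      · exact congrFun hfn ⟨i, hi⟩
      · rw [List.getElem?_eq_none (by simp at hlen1 ⊢; omega),
          List.getElem?_eq_none (by simp at hlen2 ⊢; omega)]
    rw [hpeq, hargs]
  have hOptfin : OptT.Finite := (hT.image _).insert _
  have hTgtfin : Tgt.Finite := (Preds.finite_toSet).prod (Set.Finite.pi fun _ => hOptfin)
  have hfin : GA.Finite :=
    Set.Finite.of_finite_image (hTgtfin.subset (Set.image_subset_iff.mpr hmaps)) hinj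
  refine ⟨hfin, ?_⟩
  have hOptcard : OptT.ncard ≤ n + 1 := by
    rw [hOptT, ncard_insert_of_notMem (by simp) (hT.image _),
      ncard_image_of_injective _ (Option.some_injective _)]
    omega
  have hPicard : (Set.pi Set.univ fun _ : Fin a => OptT).ncard = OptT.ncard ^ a := by
    rw [← Nat.card_coe_set_eq, Nat.card_congr (Equiv.Set.univPi fun _ : Fin a => OptT),
      Nat.card_pi]
    simp [Nat.card_coe_set_eq]
  have hTgtcard : Tgt.ncard = Preds.card * OptT.ncard ^ a := by
    rw [hTgt, ← Nat.card_coe_set_eq, Nat.card_congr (Equiv.Set.prod _ _), Nat.card_prod,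
      Nat.card_coe_set_eq, Nat.card_coe_set_eq, hPicard, ncard_coe_finset]
  calc GA.ncard ≤ Tgt.ncard := ncard_le_ncard_of_injOn enc hmaps hinj hTgtfin
    _ = Preds.card * OptT.ncard ^ a := hTgtcard
    _ ≤ Preds.card * (n + 1) ^ a :=
        Nat.mul_le_mul_left _ (Nat.pow_le_pow_left hOptcard a)

end CountAux
namespace CountAux

lemma mem_varsL {P C : Type} {b : Atom P (RArg C)} {v : ℕ} (h : RArg.var v ∈ b.args) :
    v ∈ b.varsL :=
  List.mem_filterMap.mpr ⟨RArg.var v, h, rfl⟩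

end CountAux
/-- Bound on the number of atoms in the result of a terminating
restricted chase sequence of a `δ`-bounded rule set. -/
theorem deltaBounded_result_atom_bound
    {P C : Type} (R : Finset (Rule P C)) (δ : ℕ → ℕ) (hδ : ∀ n, 0 < n → 0 < δ n)
    (hbounded : DeltaBoundedRes (↑R : Set (Rule P C)) (δ (ruleSetSize R)))
    (p a l m c : ℕ) (hm : 1 ≤ m) (hc : 1 ≤ c) (hcl : 2 ≤ c + l)
    (Preds : Finset P) (hp : Preds.card = p)
    (I0 : Inst P C) (hI0 : IsDatabase I0)
    -- `R` and `I0` use the `p` predicates in `Preds`, each of arity at most `a`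
    (hpredR : ∀ r ∈ R, ∀ b : Atom P (RArg C), (b ∈ r.body ∨ b ∈ r.head) →
      b.pred ∈ Preds ∧ b.args.length ≤ a)
    (hpredI : ∀ b ∈ I0, b.pred ∈ Preds ∧ b.args.length ≤ a)
    -- the skolemization of `R` uses `l` skolem function symbols, each of arity at most `m`
    (hl : Set.ncard {q : SkFun P C | q.1 ∈ R ∧ q.2 ∈ q.1.exVars} = l)
    (hfr : ∀ r ∈ R, r.frontierList.length ≤ m)
    -- `c` is the number of constants occurring in `I0` or in `R`
    (hcC : Set.ncard
      ({x : GConst C | ∃ b ∈ I0, GTerm.const x ∈ b.args} ∪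
       {x : GConst C | ∃ c0 : C, x = Sum.inl c0 ∧ ∃ r ∈ R, ∃ b : Atom P (RArg C),
          (b ∈ r.body ∨ b ∈ r.head) ∧ RArg.const c0 ∈ b.args}) = c)
    -- a terminating restricted chase sequence of `R` and `I0`
    (π : List (Rule P C)) (hπ : ∀ r ∈ π, r ∈ R)
    (Is : ℕ → Inst P C) (hs : ℕ → Assign P C) (hseq : RCSeq π I0 Is hs)
    (hterm : ∀ r ∈ R, ∀ h : Assign P C, ¬ ActiveTrigger r h (Is π.length)) :
    (Is π.length).Finite ∧
      (Is π.length).ncard ≤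
        p * (c + l) ^ (a * ((∑ i ∈ Finset.range (δ (ruleSetSize R) + 1), m ^ i) + 1)) :=
    by
  classical
  set bound := δ (ruleSetSize R) with hbound
  set N := ∑ i ∈ Finset.range (bound + 1), m ^ i with hN
  set K : Set (GConst C) :=
    ({x : GConst C | ∃ b ∈ I0, GTerm.const x ∈ b.args} ∪
     {x : GConst C | ∃ c0 : C, x = Sum.inl c0 ∧ ∃ r ∈ R, ∃ b : Atom P (RArg C),
        (b ∈ r.body ∨ b ∈ r.head) ∧ RArg.const c0 ∈ b.args}) with hK
  set F : Set (SkFun P C) := {q : SkFun P C | q.1 ∈ R ∧ q.2 ∈ q.1.exVars} with hF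
  set ar : SkFun P C → ℕ := fun q => q.1.frontierList.length with har
  have hKc : K.ncard = c := hcC
  have hKfin : K.Finite := by
    by_contra h
    have h0 : K.ncard = 0 := Set.Infinite.ncard h
    rw [hKc] at h0
    omega
  have hFfin : F.Finite := by
    have hsub : F ⊆ ⋃ r ∈ (↑R : Set (Rule P C)), (fun v => (r, v)) '' ↑r.exVars := by
      rintro ⟨r, v⟩ ⟨hr, hv⟩
      exact Set.mem_iUnion₂.mpr ⟨r, hr, v, hv, rfl⟩
    exact (Set.Finite.biUnion R.finite_toSet fun r _ => (r.exVars.finite_toSet).image _).subset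
      hsub
  have hFl : F.ncard ≤ l := le_of_eq hl
  have harm : ∀ q ∈ F, ar q ≤ m := by
    rintro ⟨r, v⟩ ⟨hr, _⟩
    exact hfr r hr
  -- the chase invariant
  have inv : ∀ i, i ≤ π.length → ∀ b ∈ Is i,
      b.pred ∈ Preds ∧ b.args.length ≤ a ∧ ∀ t ∈ b.args, CountAux.GoodT K F ar t := by
    intro i
    induction i with
    | zero =>
      intro _ b hb
      rw [hseq.1] at hb
      refine ⟨(hpredI b hb).1, (hpredI b hb).2, ?_⟩
      intro t ht
      obtain ⟨x, hx⟩ := hI0.2 b hb t ht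
      subst hx
      exact CountAux.GoodT.const (Or.inl ⟨b, hb, ht⟩)
    | succ i ih =>
      intro hi1
      have hi : i < π.length := by omega
      obtain ⟨hact, hstep⟩ := hseq.2 i hi
      set r := π.getD i default with hr
      have hrπ : r ∈ π := by
        rw [hr, List.getD_eq_getElem π default hi]
        exact List.getElem_mem hi
      have hrR : r ∈ R := hπ _ hrπ
      have hbody : ∀ w ∈ r.bodyVars, CountAux.GoodT K F ar (hs i w) := by
        intro w hw
        obtain ⟨ba, hba, hwba⟩ := Finset.mem_biUnion.mp hw
        have hwv : w ∈ ba.varsL := List.mem_toFinset.mp hwba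
        obtain ⟨x, hx, hxv⟩ := List.mem_filterMap.mp hwv
        have hxvar : x = RArg.var w := by
          cases x with
          | const c0 => simp [RArg.toVar?] at hxv
          | var u => simp [RArg.toVar?] at hxv; rw [hxv]
        subst hxvar
        have hmem : Atom.interp (hs i) ba ∈ Is i :=
          hact.1 (Set.mem_image_of_mem _ (Finset.mem_coe.mpr hba))
        have h2 := (ih (by omega) _ hmem).2.2
        apply h2
        show hs i w ∈ (ba.args.map (RArg.interp (hs i)))
        exact List.mem_map.mpr ⟨RArg.var w, hx, rfl⟩
      intro b hb
      rw [hstep] at hb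
      rcases hb with hb | hb
      · exact ih (by omega) b hb
      · rw [Rule.skApply, Rule.headI] at hb
        obtain ⟨b0, hb0, rfl⟩ := hb
        have hb0' : b0 ∈ r.head := Finset.mem_coe.mp hb0
        have hpred := hpredR r hrR b0 (Or.inr hb0')
        refine ⟨hpred.1, ?_, ?_⟩
        · show (b0.args.map _).length ≤ a
          rw [List.length_map]
          exact hpred.2
        · intro t ht
          obtain ⟨arg, harg, rfl⟩ := List.mem_map.mp ht
          cases arg with
          | const c0 =>
            exact CountAux.GoodT.const
              (Or.inr ⟨c0, rfl, r, hrR, b0, Or.inr hb0', harg⟩)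
          | var v =>
            show CountAux.GoodT K F ar (r.skolemExt (hs i) v)
            by_cases hv : v ∈ r.exVars
            · rw [Rule.skolemExt, if_pos hv]
              refine CountAux.GoodT.func ⟨hrR, hv⟩ (by rw [List.length_map]) ?_
              intro t' ht'
              obtain ⟨w, hw, rfl⟩ := List.mem_map.mp ht'
              have hwf : w ∈ r.frontier := (Finset.mem_sort (α := ℕ) (· ≤ ·)).mp hw
              exact hbody w (Finset.mem_inter.mp hwf).1
            · rw [Rule.skolemExt, if_neg hv]
              have hvh : v ∈ r.headVars :=
                Finset.mem_biUnion.mpr ⟨b0, hb0', List.mem_toFinset.mpr (CountAux.mem_varsL harg)⟩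
              have hvb : v ∈ r.bodyVars := by
                by_contra hvb
                exact hv (Finset.mem_sdiff.mpr ⟨hvh, hvb⟩)
              exact hbody v hvb
  -- height bound
  have hht : instHeightLe (Is π.length) bound :=
    hbounded I0 hI0 π hπ Is hs hseq π.length le_rfl
  -- counting
  obtain ⟨hTfin, hTcard⟩ :=
    CountAux.TS_count K F ar c l m hm hKfin hFfin hKc hFl hc harm bound
  obtain ⟨hGAfin, hGAcard⟩ :=
    CountAux.atom_count Preds {t : GT P C | CountAux.GoodT K F ar t ∧ t.height ≤ bound}
      hTfin a ((c + l) ^ N) (by rw [hN]; exact hTcard)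
  have hsub : Is π.length ⊆
      {b : GAtom P C | b.pred ∈ Preds ∧ b.args.length ≤ a ∧
        ∀ t ∈ b.args, t ∈ {t : GT P C | CountAux.GoodT K F ar t ∧ t.height ≤ bound}} := by
    intro b hb
    obtain ⟨h1, h2, h3⟩ := inv π.length le_rfl b hb
    exact ⟨h1, h2, fun t ht => ⟨h3 t ht, hht b hb t ht⟩⟩
  refine ⟨hGAfin.subset hsub, ?_⟩
  have hpow1 : (c + l) ^ N + 1 ≤ (c + l) ^ (N + 1) := by
    have h1 : 1 ≤ (c + l) ^ N := Nat.one_le_pow _ _ (by omega)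
    have h2 : (c + l) ^ N * 2 ≤ (c + l) ^ N * (c + l) := Nat.mul_le_mul_left _ hcl
    have h3 : (c + l) ^ (N + 1) = (c + l) ^ N * (c + l) := pow_succ _ _
    omega
  calc (Is π.length).ncard
      ≤ _ := Set.ncard_le_ncard hsub hGAfin
    _ ≤ Preds.card * ((c + l) ^ N + 1) ^ a := hGAcard
    _ ≤ p * (c + l) ^ (a * (N + 1)) := by
        rw [hp]
        refine Nat.mul_le_mul_left _ ?_
        calc ((c + l) ^ N + 1) ^ a ≤ ((c + l) ^ (N + 1)) ^ a := Nat.pow_le_pow_left hpow1 a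
          _ = (c + l) ^ (a * (N + 1)) := by rw [← pow_mul, mul_comm]
end

section
/- If a rule set R is all-instance terminating under the skolem chase (chase_sk(I,R) is finite for every database I), then R is all-instance terminating under the restricted chase (no database admits an infinite restricted chase sequence of R). -/
set_option autoImplicit false

/-- If `R` is all-instance terminating under the skolem chase, then `R`
is all-instance terminating under the restricted chase. -/
theorem resTerminating_of_skTerminating
    {P C : Type} (R : Set (Rule P C)) (h : SkTerminating R) :
    ResTerminating R := by
  rintro ⟨I0, Is, rs, hs, hDB, hI0, hstep, _, _⟩
  -- Each Is i is contained in the i-th skolem iteration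
  have hsub : ∀ i, Is i ⊆ skIter R I0 i := by
    intro i
    induction i with
    | zero => rw [hI0]; exact subset_rfl
    | succ i ih =>
      obtain ⟨hmem, hact, heq⟩ := hstep i
      rw [heq]
      intro a ha
      rcases ha with ha | ha
      · exact Or.inl (ih ha)
      · exact Or.inr ⟨rs i, hmem, hs i, fun x hx => ih (hact.1 hx), ha⟩
  -- Monotonicity of Is
  have hmono : ∀ i j, i ≤ j → Is i ⊆ Is j := by
    intro i j hij
    induction j with
    | zero =>
      have : i = 0 := Nat.le_zero.mp hij
      subst this; exact subset_rfl
    | succ j ih =>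
      rcases Nat.lt_or_ge i (j+1) with hlt | hge
      · have := ih (by omega)
        obtain ⟨_, _, heq⟩ := hstep j
        rw [heq]; exact this.trans Set.subset_union_left
      · have : i = j + 1 := by omega
        subst this; exact subset_rfl
  -- Each step adds a new atom
  have hnew : ∀ i, ∃ a, a ∈ Is (i+1) ∧ a ∉ Is i := by
    intro i
    obtain ⟨_, hact, heq⟩ := hstep i
    have hagree : ∀ v ∈ (rs i).bodyVars, (rs i).skolemExt (hs i) v = hs i v := by
      intro v hv
      unfold Rule.skolemExt
      rw [if_neg]
      intro hvex
      exact (Finset.mem_sdiff.mp hvex).2 hv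
    have hnsub := hact.2 ((rs i).skolemExt (hs i)) hagree
    rw [Set.not_subset] at hnsub
    obtain ⟨a, haI, haN⟩ := hnsub
    refine ⟨a, ?_, haN⟩
    rw [heq]
    exact Or.inr haI
  choose f hf1 hf2 using hnew
  -- f is injective, lands in the finite skolem chase
  have hinj : Function.Injective f := by
    intro i j hij
    by_contra hne
    rcases Nat.lt_or_ge i j with hlt | hge
    · exact hf2 j (hij ▸ hmono (i+1) j hlt (hf1 i))
    · have hlt : j < i := lt_of_le_of_ne hge (Ne.symm hne)
      exact hf2 i (hij ▸ hmono (j+1) i hlt (hf1 j))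
  have hmemchase : ∀ i, f i ∈ skChase R I0 := by
    intro i
    exact Set.mem_iUnion.mpr ⟨i+1, hsub (i+1) (hf1 i)⟩
  exact (Set.infinite_of_injective_forall_mem hinj hmemchase) (h I0 hDB)
end
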